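/- Let q = 2^r be an even prime power, a, b, c ∈ F_q with c ≠ 0 and a + b + c of absolute trace 0, and fix v ∈ F_q of absolute trace e. Then the number of pairs (x,y) ∈ F_q² satisfying both (√v·(x+y))² + √v·(x+y) + xy + v = a and (√(v+c)·(x+y))² + √(v+c)·(x+y) + xy + v + c = b equals Σ_τ |{z ∈ F_q ∪ {∞} : z² + z = v + a c/τ²}|, where τ ranges over the two elements of F_q with τ² + τ = a + b + c (with the convention that for τ = 0, z = ∞ is the unique solution). -/

import Mathlib

open scoped Classical

/-- Let `q = 2^r`, `F = F_q`, and `a, b, c ∈ F` with `c ≠ 0` and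
`a + b + c` of absolute trace `0` (the absolute trace being `w ↦ ∑_{i<r} w^{2^i}`).
Fix `v ∈ F`, and let `√v`, `√(v+c)` be the square roots of `v` and `v + c`
(squaring is a bijection in characteristic 2). Then the number of pairs
`(x, y) ∈ F²` satisfying both
`(√v (x+y))² + √v (x+y) + xy + v = a` and `(√(v+c) (x+y))² + √(v+c) (x+y) + xy + v + c = b`
equals `∑_τ |{z ∈ F ∪ {∞} : z² + z = v + ac/τ²}|`, the sum over the two `τ ∈ F` with
`τ² + τ = a + b + c`, with the convention that for `τ = 0` the point `z = ∞` is the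
unique solution (contributing `1`). -/
theorem count_intersection_parameter_pairs
    (q r : ℕ) (hr : 0 < r) (hq : q = 2 ^ r)
    (F : Type*) [Field F] [Fintype F] (hF : Fintype.card F = q)
    (a b c v : F) (hc : c ≠ 0)
    (htr : ∑ i ∈ Finset.range r, (a + b + c) ^ 2 ^ i = 0)
    (sv svc : F) (hsv : sv ^ 2 = v) (hsvc : svc ^ 2 = v + c) :
    ({p : F × F |
        (sv * (p.1 + p.2)) ^ 2 + sv * (p.1 + p.2) + p.1 * p.2 + v = a ∧
        (svc * (p.1 + p.2)) ^ 2 + svc * (p.1 + p.2) + p.1 * p.2 + v + c = b}).ncard =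
      ∑ τ ∈ Finset.univ.filter (fun τ : F => τ ^ 2 + τ = a + b + c),
        (if τ = 0 then 1 else ({z : F | z ^ 2 + z = v + a * c / τ ^ 2}).ncard) := by
  classical
  -- characteristic 2
  have hchar : CharP F 2 := by
    have h1 : CharP F (ringChar F) := ringChar.charP F
    have hp : (ringChar F).Prime := CharP.char_is_prime F _
    obtain ⟨n, -, hn⟩ := FiniteField.card F (ringChar F)
    have : ringChar F = 2 := by
      have hdvd : ringChar F ∣ 2 ^ r := by
        rw [← hq, ← hF, hn]; exact dvd_pow_self _ n.pos.ne'
      exact (Nat.prime_dvd_prime_iff_eq hp Nat.prime_two).mp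
        (Nat.Prime.dvd_of_dvd_pow hp hdvd)
    rwa [this] at h1
  haveI := hchar
  have h2 : (2 : F) = 0 := by exact_mod_cast CharP.cast_eq_zero F 2
  set sc := sv + svc with hscdef
  have hscsq : sc ^ 2 = c := by
    linear_combination hsv + hsvc + (v + sv * svc) * h2
  have hsc0 : sc ≠ 0 := fun h => hc (by rw [← hscsq, h]; ring)
  have hsqinj : Function.Injective fun x : F => x * x := by
    intro x y h
    simp only at h
    have hsq : (x + y) ^ 2 = 0 := by linear_combination h + (y * y + x * y) * h2
    have hxy : x + y = 0 := pow_eq_zero_iff (n := 2) (by norm_num) |>.mp hsq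
    linear_combination hxy - y * h2
  have hsqsurj : Function.Surjective fun x : F => x * x :=
    Finite.injective_iff_surjective.mp hsqinj
  rw [Set.ncard_eq_toFinset_card']
  simp only [Set.toFinset_setOf]
  rw [Finset.card_eq_sum_card_fiberwise
      (f := fun p : F × F => sc * (p.1 + p.2))
      (t := Finset.univ.filter fun τ : F => τ ^ 2 + τ = a + b + c) ?_]
  swap
  · rintro ⟨x, y⟩ hp
    simp only [Finset.mem_coe, Finset.mem_filter, Finset.mem_univ, true_and] at hp ⊢
    obtain ⟨h1, h2'⟩ := hp
    linear_combination ((x+y)^2) * hscsq + h1 + h2' + (x+y) * hscdef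
      - (x+y)^2 * hsv - (x+y)^2 * hsvc + (-(v*(x+y)^2) - x*y - v - c) * h2
  refine Finset.sum_congr rfl fun τ hτmem => ?_
  simp only [Finset.mem_filter, Finset.mem_univ, true_and] at hτmem
  rcases eq_or_ne τ 0 with rfl | hτ0
  · rw [if_pos rfl]
    have habc : a + b + c = 0 := by linear_combination -hτmem
    obtain ⟨x0, hx0⟩ := hsqsurj (a - v)
    simp only at hx0
    have hsingle : (Finset.filter
        (fun p : F × F => ((sv * (p.1 + p.2)) ^ 2 + sv * (p.1 + p.2) + p.1 * p.2 + v = a ∧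
          (svc * (p.1 + p.2)) ^ 2 + svc * (p.1 + p.2) + p.1 * p.2 + v + c = b))
        Finset.univ).filter (fun p => sc * (p.1 + p.2) = 0) = {(x0, x0)} := by
      ext ⟨x, y⟩
      simp only [Finset.mem_filter, Finset.mem_univ, true_and, Finset.mem_singleton,
        Prod.mk.injEq]
      constructor
      · rintro ⟨⟨hE1, hE2⟩, h3⟩
        have hps : x + y = 0 := by
          rcases mul_eq_zero.mp h3 with h | h
          · exact absurd h hsc0
          · exact h
        have hyx : y = x := by linear_combination hps - x * h2
        have hx : x = x0 := by
          apply hsqinj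
          simp only
          linear_combination hE1 - hx0 + (-sv - 3*sv^2*x - sv^2*y - x) * hyx
            + (-(2*sv^2*x^2) - sv*x) * h2
        exact ⟨hx, hyx.trans hx⟩
      · rintro ⟨hx', hy'⟩
        refine ⟨⟨?_, ?_⟩, ?_⟩ <;> rw [hx', hy']
        · linear_combination hx0 + (2*sv^2*x0^2 + sv*x0) * h2
        · linear_combination hx0 + habc + (-b + 2*svc^2*x0^2 + svc*x0) * h2
        · linear_combination (sc*x0) * h2
    rw [hsingle, Finset.card_singleton]
  · rw [if_neg hτ0]
    have hzset : {z : F | z ^ 2 + z = v + a * c / τ ^ 2} =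
        ↑(Finset.univ.filter fun z : F => z ^ 2 + z = v + a * c / τ ^ 2) := by
      ext z; simp
    rw [hzset, Set.ncard_coe_finset]
    refine Finset.card_nbij' (i := fun p : F × F => sc * (p.1 + sv) / τ)
      (j := fun z : F => (τ * z / sc + sv, τ * (z + 1) / sc + sv)) ?_ ?_ ?_ ?_
    · rintro ⟨x, y⟩ hp
      simp only [Finset.mem_coe, Finset.mem_filter, Finset.mem_univ, true_and] at hp ⊢
      obtain ⟨⟨hE1, hE2⟩, hτp⟩ := hp
      field_simp
      linear_combination (-(sc*(x+sv) - v*(τ+sc*(x+y)))) * hτp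
        + (sv^2*(x+y)^2+sv*(x+y)+x*y+v) * hscsq + c * hE1
        + (sc^2*(1-(x+y)^2)) * hsv + (sc^2*(x^2+x*sv-(x+y)^2*v)) * h2
    · intro z hz
      simp only [Finset.mem_coe, Finset.mem_filter, Finset.mem_univ, true_and] at hz ⊢
      field_simp at hz
      refine ⟨⟨?_, ?_⟩, ?_⟩
      · field_simp
        linear_combination hz + (τ^2+sc^2) * hsv - a * hscsq
          + (2*sv^2*((τ*z+sv*sc)*τ + (τ*z+sv*sc)^2) + sv*sc*τ + sv*sc*(τ*z+sv*sc)
              + τ*z*sv*sc + v*τ^2 + v*sc^2) * h2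
      · field_simp
        linear_combination hz + τ^2 * hsvc + sc^2 * hsv - sc*τ * hscdef
          - (τ^2 + a + 2*sc^2) * hscsq + sc^2 * hτmem
          + (2*svc^2*((τ*z+sv*sc)*τ + (τ*z+sv*sc)^2) + svc*sc*(τ*z+sv*sc) + τ*z*sv*sc
              + v*τ^2 + v*sc^2 + sc^2*a + sc^4) * h2
      · field_simp
        linear_combination (τ*z + sv*sc) * h2
    · rintro ⟨x, y⟩ hp
      simp only [Finset.mem_coe, Finset.mem_filter, Finset.mem_univ, true_and] at hp
      obtain ⟨⟨hE1, hE2⟩, hτp⟩ := hp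
      refine Prod.ext ?_ ?_
      · simp only
        field_simp
        linear_combination sv * h2
      · simp only
        field_simp
        linear_combination -hτp + (sc*x + sv*sc) * h2
    · intro z hz
      simp only
      field_simp
      linear_combination (sv*sc) * h2
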